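/- Let Γ be a finite connected cubic graph and G ≤ Aut(Γ) vertex-transitive. Then for any vertex α, either G_α is a 2-group, or |G_α| = 3·2^s for some s ≥ 0. In particular, every element of G whose order is coprime to both 2 and 3 acts semiregularly on the vertices of Γ. -/

import Mathlib

open Equiv

/-- Step lemma: an odd-order automorphism fixing a vertex `u` of a cubic graph and
one of its neighbours `v` fixes every neighbour of `u`. -/
private lemma cubic_step_fix {V : Type*} [Fintype V] (Γ : SimpleGraph V)
    (hcubic : ∀ v : V, (Γ.neighborSet v).ncard = 3) (π : Equiv.Perm V)
    (hpre : ∀ u w : V, Γ.Adj (π u) (π w) ↔ Γ.Adj u w) (hodd : Odd (orderOf π))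
    {u v : V} (hv : Γ.Adj u v) (hu : π u = u) (hfv : π v = v)
    {w : V} (hw : Γ.Adj u w) : π w = w := by
  have hmap : ∀ x, Γ.Adj u x → Γ.Adj u (π x) := fun x hx => by
    have h := (hpre u x).mpr hx
    rwa [hu] at h
  have key : π (π w) = w := by
    by_cases hfw : π w = w
    · rw [hfw, hfw]
    · have hwv : w ≠ v := fun h => hfw (by rw [h]; exact hfv)
      have h2 : Γ.Adj u (π w) := hmap w hw
      have h3 : Γ.Adj u (π (π w)) := hmap _ h2
      have hne1 : π w ≠ v := fun h => hwv (π.injective (h.trans hfv.symm))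
      have hne2 : π (π w) ≠ v := fun h => hne1 (π.injective (h.trans hfv.symm))
      have hne3 : π (π w) ≠ π w := fun h => hfw (π.injective h)
      by_contra hne4
      have hne5 : π w ≠ w := hfw
      have hsub : ({v, w, π w, π (π w)} : Set V) ⊆ Γ.neighborSet u := by
        intro x hx
        simp only [Set.mem_insert_iff, Set.mem_singleton_iff] at hx
        rcases hx with rfl | rfl | rfl | rfl
        · exact hv
        · exact hw
        · exact h2
        · exact h3
      have hcard : ({v, w, π w, π (π w)} : Set V).ncard = 4 := by
        rw [Set.ncard_insert_of_notMem (by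
          simp only [Set.mem_insert_iff, Set.mem_singleton_iff]
          push_neg
          exact ⟨hwv.symm, Ne.symm hne1, Ne.symm hne2⟩),
          Set.ncard_insert_of_notMem (by
          simp only [Set.mem_insert_iff, Set.mem_singleton_iff]
          push_neg
          exact ⟨Ne.symm hne5, fun h => hne4 h.symm⟩),
          Set.ncard_insert_of_notMem (by
          simp only [Set.mem_singleton_iff]
          exact Ne.symm hne3), Set.ncard_singleton]
      have hle := Set.ncard_le_ncard hsub (Set.toFinite _)
      rw [hcard, hcubic u] at hle
      omega
  have hsq : (π ^ 2) w = w := by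
    rw [pow_two, Equiv.Perm.mul_apply, key]
  obtain ⟨k, hk⟩ := hodd
  have h2k : (π ^ (2 * k)) w = w := by
    rw [pow_mul]
    exact Equiv.Perm.pow_apply_eq_self_of_apply_eq_self hsq k
  have h1 : (π ^ (2 * k + 1)) w = w := by
    rw [← hk, pow_orderOf_eq_one]
    rfl
  have h2 : (π ^ (2 * k + 1)) w = π w := by
    rw [pow_succ', Equiv.Perm.mul_apply, h2k]
  rw [← h2]
  exact h1

/-- An odd-order automorphism of a connected cubic graph fixing a vertex and all of
its neighbours is the identity. -/
private lemma cubic_fix_all {V : Type*} [Fintype V] (Γ : SimpleGraph V)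
    (hconn : Γ.Connected) (hcubic : ∀ v : V, (Γ.neighborSet v).ncard = 3)
    (π : Equiv.Perm V) (hpre : ∀ u w : V, Γ.Adj (π u) (π w) ↔ Γ.Adj u w)
    (hodd : Odd (orderOf π)) (α : V) (hα : π α = α)
    (hN : ∀ w, Γ.Adj α w → π w = w) : π = 1 := by
  have aux : ∀ (u v : V) (p : Γ.Walk u v),
      (π u = u ∧ ∀ w, Γ.Adj u w → π w = w) →
      (π v = v ∧ ∀ w, Γ.Adj v w → π w = w) := by
    intro u v p
    induction p with
    | nil => exact id
    | @cons a b c h q ih =>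
      rintro ⟨ha, haN⟩
      apply ih
      refine ⟨haN b h, ?_⟩
      intro w hw
      exact cubic_step_fix Γ hcubic π hpre hodd h.symm (haN b h) ha hw
  ext v
  obtain ⟨p⟩ := hconn.preconnected α v
  exact (aux α v p ⟨hα, hN⟩).1

/-- The vertex stabiliser in a connected cubic graph is a 2-group or of order `3·2^s`. -/
private lemma cubic_stab_struct {V : Type*} [Fintype V] (Γ : SimpleGraph V)
    (hconn : Γ.Connected) (hcubic : ∀ v : V, (Γ.neighborSet v).ncard = 3)
    (G : Subgroup (Equiv.Perm V))
    (hG : ∀ g ∈ G, ∀ u w : V, Γ.Adj (g u) (g w) ↔ Γ.Adj u w) (α : V) :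
    IsPGroup 2 ↥(MulAction.stabilizer G α) ∨
      ∃ s : ℕ, Nat.card ↥(MulAction.stabilizer G α) = 3 * 2 ^ s := by
  classical
  haveI : Fact (Nat.Prime 2) := ⟨Nat.prime_two⟩
  set H : Subgroup ↥G := MulAction.stabilizer G α with hH
  have hfix : ∀ h : ↥H, (((h : ↥G) : Equiv.Perm V)) α = α := by
    intro h
    have h2 : (h : ↥G) • α = α := h.2
    exact h2
  have hp : ∀ h : ↥H, ∀ x : V,
      x ∈ Γ.neighborSet α ↔ ((h : ↥G) : Equiv.Perm V) x ∈ Γ.neighborSet α := by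
    intro h x
    simp only [SimpleGraph.mem_neighborSet]
    constructor
    · intro hx
      have := (hG _ (h : ↥G).2 α x).mpr hx
      rwa [hfix h] at this
    · intro hx
      have : Γ.Adj (((h : ↥G) : Equiv.Perm V) α) (((h : ↥G) : Equiv.Perm V) x) := by
        rwa [hfix h]
      exact (hG _ (h : ↥G).2 α x).mp this
  let φ : ↥H →* Equiv.Perm (Γ.neighborSet α) :=
    { toFun := fun h => Equiv.Perm.subtypePerm ((h : ↥G) : Equiv.Perm V) (fun x => (hp h x).symm)
      map_one' := by
        ext x
        simp [Equiv.Perm.subtypePerm]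
      map_mul' := by
        intro a b
        ext x
        simp [Equiv.Perm.subtypePerm] }
  -- the homomorphism from the kernel down to `Perm V`
  let ψ : ↥φ.ker →* Equiv.Perm V :=
    G.subtype.comp (H.subtype.comp φ.ker.subtype)
  have hψinj : Function.Injective ψ := by
    simp only [ψ, MonoidHom.coe_comp]
    exact G.subtype_injective.comp (H.subtype_injective.comp φ.ker.subtype_injective)
  have hker : IsPGroup 2 ↥φ.ker := by
    intro g
    set n := orderOf g with hn
    set t := n.factorization 2 with ht
    refine ⟨t, ?_⟩
    set h := g ^ (2 ^ t) with hdef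
    have hn0 : n ≠ 0 := (orderOf_pos g).ne'
    have hdvd : 2 ^ t ∣ n := Nat.ordProj_dvd n 2
    have hordh : orderOf h = n / 2 ^ t := by
      rw [hdef, orderOf_pow, ← hn, Nat.gcd_eq_right hdvd]
    have hoddh : Odd (orderOf h) := by
      rw [Nat.odd_iff, ← Nat.two_dvd_ne_zero]
      rw [hordh]
      exact Nat.not_dvd_ordCompl Nat.prime_two hn0
    set π := ψ h with hπ
    have hπG : π ∈ G := (((h : ↥H) : ↥G)).2
    have hπα : π α = α := hfix (h : ↥H)
    have hπodd : Odd (orderOf π) := by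
      rwa [hπ, orderOf_injective ψ hψinj h]
    have hπN : ∀ w, Γ.Adj α w → π w = w := by
      intro w hw
      have hmem : (h : ↥H) ∈ φ.ker := h.2
      rw [MonoidHom.mem_ker] at hmem
      have := congrArg (fun σ => (σ ⟨w, hw⟩ : Γ.neighborSet α)) hmem
      exact (by simpa [φ, Equiv.Perm.subtypePerm, Subtype.ext_iff] using this :
        ((((h : ↥H) : ↥G) : Equiv.Perm V)) w = w)
    have : π = 1 :=
      cubic_fix_all Γ hconn hcubic π (fun u w => hG π hπG u w) hπodd α hπα hπN
    have h1 : h = 1 := hψinj (by rw [← hπ, this, map_one])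
    exact h1
  -- counting
  obtain ⟨a, ha⟩ := (IsPGroup.iff_card).mp hker
  have hcount : Nat.card ↥H = Nat.card (↥H ⧸ φ.ker) * Nat.card ↥φ.ker :=
    Subgroup.card_eq_card_quotient_mul_card_subgroup φ.ker
  have hquot : Nat.card (↥H ⧸ φ.ker) = Nat.card ↥φ.range :=
    Nat.card_congr (QuotientGroup.quotientKerEquivRange φ).toEquiv
  have hNfin : Fintype ↥(Γ.neighborSet α) := Fintype.ofFinite _
  have hperm : Nat.card (Equiv.Perm (Γ.neighborSet α)) = 6 := by
    rw [Nat.card_eq_fintype_card, Fintype.card_perm]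
    have : Fintype.card ↥(Γ.neighborSet α) = 3 := by
      rw [← Nat.card_eq_fintype_card, Nat.card_coe_set_eq, hcubic α]
    rw [this]
    rfl
  have hdvd6 : Nat.card ↥φ.range ∣ 6 := by
    rw [← hperm]
    exact Subgroup.card_subgroup_dvd_card φ.range
  have hmem : Nat.card ↥φ.range ∈ Nat.divisors 6 :=
    Nat.mem_divisors.mpr ⟨hdvd6, by norm_num⟩
  have hdivs : Nat.divisors 6 = {1, 2, 3, 6} := by decide
  rw [hdivs] at hmem
  simp only [Finset.mem_insert, Finset.mem_singleton] at hmem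
  rw [hquot] at hcount
  rcases hmem with hd | hd | hd | hd <;> rw [hd] at hcount
  · left
    exact IsPGroup.of_card (n := a) (by rw [hcount, ha]; ring)
  · left
    exact IsPGroup.of_card (n := a + 1) (by rw [hcount, ha]; ring)
  · right
    exact ⟨a, by rw [hcount, ha]⟩
  · right
    exact ⟨a + 1, by rw [hcount, ha]; ring⟩

/-- In a finite connected cubic vertex-transitive graph, each vertex stabiliser is
either a 2-group or has order `3·2^s`; in particular every automorphism in `G` whose
order is coprime to 2 and 3 is semiregular on the vertices. -/
theorem stmt1 {V : Type*} [Fintype V] (Γ : SimpleGraph V) (hconn : Γ.Connected)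
    (hcubic : ∀ v : V, (Γ.neighborSet v).ncard = 3)
    (G : Subgroup (Equiv.Perm V))
    (hG : ∀ g ∈ G, ∀ u w : V, Γ.Adj (g u) (g w) ↔ Γ.Adj u w)
    (htrans : ∀ u w : V, ∃ g ∈ G, g u = w) (α : V) :
    (IsPGroup 2 ↥(MulAction.stabilizer G α) ∨
      ∃ s : ℕ, Nat.card ↥(MulAction.stabilizer G α) = 3 * 2 ^ s) ∧
    ∀ g ∈ G, Nat.Coprime (orderOf g) 6 →
      ∀ x ∈ Subgroup.zpowers g, (∃ v : V, x v = v) → x = 1 := by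
  refine ⟨cubic_stab_struct Γ hconn hcubic G hG α, ?_⟩
  intro g hg hcop x hx ⟨v, hv⟩
  have hxG : x ∈ G := Subgroup.zpowers_le.mpr hg hx
  have hstab : (⟨x, hxG⟩ : ↥G) ∈ MulAction.stabilizer G v := by
    show (⟨x, hxG⟩ : ↥G) • v = v
    simpa [Submonoid.smul_def, Equiv.Perm.smul_def] using hv
  set y : ↥(MulAction.stabilizer G v) := ⟨⟨x, hxG⟩, hstab⟩ with hy
  have hox : orderOf x = orderOf y := by
    have h1 := orderOf_injective G.subtype G.subtype_injective
      ((MulAction.stabilizer G v).subtype y)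
    have h2 := orderOf_injective (MulAction.stabilizer G v).subtype
      (MulAction.stabilizer G v).subtype_injective y
    rw [h2] at h1
    exact h1
  have hdvd : orderOf x ∣ Nat.card ↥(MulAction.stabilizer G v) := by
    rw [hox]
    exact orderOf_dvd_natCard y
  have hcop' : Nat.Coprime (orderOf x) 6 :=
    Nat.Coprime.coprime_dvd_left (orderOf_dvd_of_mem_zpowers hx) hcop
  have hcop2 : Nat.Coprime (orderOf x) 2 :=
    hcop'.coprime_dvd_right (by norm_num)
  have hcop3 : Nat.Coprime (orderOf x) 3 :=
    hcop'.coprime_dvd_right (by norm_num)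
  have hone : orderOf x = 1 := by
    rcases cubic_stab_struct Γ hconn hcubic G hG v with hpg | ⟨s, hs⟩
    · haveI : Fact (Nat.Prime 2) := ⟨Nat.prime_two⟩
      obtain ⟨a, ha⟩ := IsPGroup.iff_card.mp hpg
      rw [ha] at hdvd
      exact (hcop2.pow_right a).eq_one_of_dvd hdvd
    · rw [hs] at hdvd
      exact (hcop3.mul_right (hcop2.pow_right s)).eq_one_of_dvd hdvd
  rwa [orderOf_eq_one_iff] at hone
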